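/- Let n ≥ 2 and 0 < δ < 1. There exist constants c = c(n,δ) > 0 and C = C(n,δ) > 0 such that for every nonzero symmetric matrix A ∈ ℝ^{n×n} satisfying the Cordes condition (n−1+δ)·|A|² ≤ (tr A)², and for every symmetric matrix M ∈ ℝ^{n×n}, one has c·|M|² ≤ |M|² − (tr M)² + (C/|A|²)·⟨A,M⟩². -/

import Mathlib

set_option maxHeartbeats 1000000

private lemma my_nonneg {x k : ℝ} (hk : 0 < k) (h : 0 ≤ x * k) : 0 ≤ x :=
  le_of_mul_le_mul_right (by simpa using h) hk
lemma delta_nonneg (N δ a τ : ℝ) (hN : 2 ≤ N) (hδ0 : 0 < δ) (hδ1 : δ < 1) (ha : 0 < a)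
    (h1 : 0 ≤ τ^2 - (N-1+δ)*a) (h2 : 0 ≤ N*a - τ^2) :
    0 ≤ (a*(τ^2-(N-1+δ/2)*a)) * ((1-δ/2)*a*N + (N*a-τ^2)*(2*N/δ)) - ((1-δ/2)*a*τ)^2 := by
  have hd1 : (0:ℝ) < 1 - δ := by linarith
  have hN0 : (0:ℝ) < N := by linarith
  have hkey : ((a*(τ^2-(N-1+δ/2)*a)) * ((1-δ/2)*a*N + (N*a-τ^2)*(2*N/δ)) - ((1-δ/2)*a*τ)^2)
      * (a*(1-δ)*δ) =
      a^3*δ*(N*δ*(1-δ)/2 + (1-δ)*(1-δ+δ^2/4))*(N*a-τ^2)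
      + 2*N*a^2*(1-δ)*((τ^2-(N-1+δ)*a)*(N*a-τ^2)) := by
    field_simp
    ring
  refine my_nonneg (k := a*(1-δ)*δ) (by positivity) ?_
  rw [hkey]
  have e1 : 0 ≤ a^3*δ*(N*δ*(1-δ)/2 + (1-δ)*(1-δ+δ^2/4))*(N*a-τ^2) := by
    have : 0 ≤ N*δ*(1-δ)/2 + (1-δ)*(1-δ+δ^2/4) := by
      nlinarith [mul_pos hN0 (mul_pos hδ0 hd1), mul_nonneg hd1.le (sq_nonneg (1-δ/2))]
    positivity
  have e2 : 0 ≤ 2*N*a^2*(1-δ)*((τ^2-(N-1+δ)*a)*(N*a-τ^2)) := by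
    have := mul_nonneg h1 h2
    positivity
  linarith

lemma cordes_scalar (N δ a s τ t p : ℝ) (hN : 2 ≤ N) (hδ0 : 0 < δ) (hδ1 : δ < 1)
    (ha : 0 < a) (hs : 0 ≤ s)
    (hcordes : (N - 1 + δ) * a ≤ τ^2) (hcs : τ^2 ≤ N * a)
    (hG : a*t^2 - 2*τ*t*p + N*p^2 ≤ (N*a - τ^2)*s) :
    (δ/2) * a * s ≤ a*s - a*t^2 + (2*N/δ) * p^2 := by
  have hN0 : (0:ℝ) < N := by linarith
  have h1 : 0 ≤ τ^2 - (N-1+δ)*a := by linarith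
  have h2 : 0 ≤ N*a - τ^2 := by linarith
  have hd1 : (0:ℝ) < 1 - δ := by linarith
  rcases eq_or_lt_of_le hcs with heq | hlt
  · -- τ^2 = N*a
    have hP0 : 0 ≤ a*t^2 - 2*τ*t*p + N*p^2 := by
      nlinarith [sq_nonneg (N*p - τ*t)]
    have hP : a*t^2 - 2*τ*t*p + N*p^2 = 0 := by nlinarith
    have hNp' : N*p = τ*t := by nlinarith [sq_nonneg (N*p - τ*t)]
    have hat : a*t^2 = N*p^2 := by
      have h' : N*(a*t^2) = N*(N*p^2) := by
        linear_combination (-(t^2))*heq - (N*p+τ*t)*hNp'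
      exact mul_left_cancel₀ hN0.ne' h'
    have hCN : N ≤ 2*N/δ := by
      rw [le_div_iff₀ hδ0]; nlinarith
    nlinarith [sq_nonneg p, mul_nonneg ha.le hs]
  · -- τ^2 < N*a
    have hΔ := delta_nonneg N δ a τ hN hδ0 hδ1 ha h1 h2
    have hA0pos : 0 < a*(τ^2-(N-1+δ/2)*a) := by
      have : 0 < τ^2 - (N-1+δ/2)*a := by nlinarith
      positivity
    have hGn : 0 ≤ (N*a-τ^2)*s - (a*t^2 - 2*τ*t*p + N*p^2) := by linarith
    -- R ≤ F * S
    have h5 : (a*(τ^2-(N-1+δ/2)*a))*t^2 - 2*((1-δ/2)*a*τ)*t*p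
        + ((1-δ/2)*a*N + (N*a-τ^2)*(2*N/δ))*p^2
        ≤ ((1-δ/2)*a*s - a*t^2 + (2*N/δ)*p^2) * (N*a-τ^2) := by
      have hcn : (0:ℝ) ≤ 1 - δ/2 := by linarith
      nlinarith [mul_nonneg (mul_nonneg hcn ha.le) hGn]
    have h6 : 0 ≤ ((a*(τ^2-(N-1+δ/2)*a))*t^2 - 2*((1-δ/2)*a*τ)*t*p
        + ((1-δ/2)*a*N + (N*a-τ^2)*(2*N/δ))*p^2) * (a*(τ^2-(N-1+δ/2)*a)) := by
      have hid : ((a*(τ^2-(N-1+δ/2)*a))*t^2 - 2*((1-δ/2)*a*τ)*t*p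
          + ((1-δ/2)*a*N + (N*a-τ^2)*(2*N/δ))*p^2) * (a*(τ^2-(N-1+δ/2)*a))
          = ((a*(τ^2-(N-1+δ/2)*a))*t - ((1-δ/2)*a*τ)*p)^2
            + ((a*(τ^2-(N-1+δ/2)*a)) * ((1-δ/2)*a*N + (N*a-τ^2)*(2*N/δ))
              - ((1-δ/2)*a*τ)^2)*p^2 := by ring
      rw [hid]
      have := sq_nonneg ((a*(τ^2-(N-1+δ/2)*a))*t - ((1-δ/2)*a*τ)*p)
      have := mul_nonneg hΔ (sq_nonneg p)
      linarith
    have hR0 := my_nonneg hA0pos h6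
    have hF0 : 0 ≤ (1-δ/2)*a*s - a*t^2 + (2*N/δ)*p^2 :=
      my_nonneg (k := N*a - τ^2) (by linarith) (by linarith)
    linarith
lemma G_from_fam (N a s τ t p : ℝ) (hN0 : 0 < N) (hs : 0 ≤ s) (hcs : τ^2 ≤ N*a)
    (fam : ∀ l m : ℝ, 0 ≤ s + l^2*N + 2*l*m*τ + m^2*a - 2*l*t - 2*m*p) :
    a*t^2 - 2*τ*t*p + N*p^2 ≤ (N*a - τ^2)*s := by
  have hS : 0 ≤ N*a - τ^2 := by linarith
  have hP0 : 0 ≤ a*t^2 - 2*τ*t*p + N*p^2 := by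
    refine my_nonneg hN0 ?_
    nlinarith [sq_nonneg (N*p - τ*t), mul_nonneg hS (sq_nonneg t)]
  have hid : ∀ ε : ℝ, s + (ε*(a*t-τ*p))^2*N + 2*(ε*(a*t-τ*p))*(ε*(N*p-τ*t))*τ
      + (ε*(N*p-τ*t))^2*a - 2*(ε*(a*t-τ*p))*t - 2*(ε*(N*p-τ*t))*p
      = s + ε^2*((N*a-τ^2)*(a*t^2 - 2*τ*t*p + N*p^2))
        - 2*ε*(a*t^2 - 2*τ*t*p + N*p^2) := by
    intro ε; ring
  have fam' : ∀ ε : ℝ, 0 ≤ s + ε^2*((N*a-τ^2)*(a*t^2 - 2*τ*t*p + N*p^2))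
      - 2*ε*(a*t^2 - 2*τ*t*p + N*p^2) := by
    intro ε
    have := fam (ε*(a*t-τ*p)) (ε*(N*p-τ*t))
    rw [hid ε] at this
    exact this
  rcases eq_or_lt_of_le hS with hS0 | hSpos
  · -- N*a - τ^2 = 0
    rcases eq_or_lt_of_le hP0 with hP | hP
    · rw [← hS0, ← hP]; simp
    · exfalso
      have h := fam' ((s+1)/(2*(a*t^2 - 2*τ*t*p + N*p^2)))
      rw [← hS0] at h
      have he : 2*((s+1)/(2*(a*t^2 - 2*τ*t*p + N*p^2)))*(a*t^2 - 2*τ*t*p + N*p^2)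
          = s + 1 := by
        rw [show 2*((s+1)/(2*(a*t^2 - 2*τ*t*p + N*p^2)))*(a*t^2 - 2*τ*t*p + N*p^2)
            = (s+1) * (2*(a*t^2 - 2*τ*t*p + N*p^2)) / (2*(a*t^2 - 2*τ*t*p + N*p^2)) by ring,
          mul_div_assoc, div_self (mul_pos two_pos hP).ne', mul_one]
      nlinarith [h, he]
  · have h := fam' (1/(N*a - τ^2))
    have he : (1/(N*a - τ^2))^2*((N*a-τ^2)*(a*t^2 - 2*τ*t*p + N*p^2))
        = (a*t^2 - 2*τ*t*p + N*p^2)/(N*a - τ^2) := by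
      field_simp
    have he2 : 2*(1/(N*a - τ^2))*(a*t^2 - 2*τ*t*p + N*p^2)
        = 2*((a*t^2 - 2*τ*t*p + N*p^2)/(N*a - τ^2)) := by
      field_simp
    rw [he, he2] at h
    have : (a*t^2 - 2*τ*t*p + N*p^2)/(N*a - τ^2) ≤ s := by linarith
    calc a*t^2 - 2*τ*t*p + N*p^2
        = ((a*t^2 - 2*τ*t*p + N*p^2)/(N*a - τ^2))*(N*a - τ^2) := by rw [div_mul_cancel₀ _ hSpos.ne']
      _ ≤ s*(N*a - τ^2) := by
          exact mul_le_mul_of_nonneg_right this hSpos.le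
      _ = (N*a - τ^2)*s := by ring
lemma sum_one_mul {n : ℕ} (X : Matrix (Fin n) (Fin n) ℝ) :
    ∑ i, ∑ j, (1 : Matrix (Fin n) (Fin n) ℝ) i j * X i j = X.trace := by
  simp [Matrix.one_apply, Matrix.trace, Matrix.diag]

lemma sum_one_sq {n : ℕ} :
    ∑ i : Fin n, ∑ j : Fin n, ((1 : Matrix (Fin n) (Fin n) ℝ) i j)^2 = (n : ℝ) := by
  simp [Matrix.one_apply]

lemma sum_expand {n : ℕ} (A M : Matrix (Fin n) (Fin n) ℝ) (l m : ℝ) :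
    0 ≤ (∑ i, ∑ j, M i j ^ 2) + l^2*(n:ℝ) + 2*l*m*(Matrix.trace A)
      + m^2*(∑ i, ∑ j, A i j ^ 2) - 2*l*(Matrix.trace M)
      - 2*m*(∑ i, ∑ j, A i j * M i j) := by
  have h0 : 0 ≤ ∑ i, ∑ j,
      (M i j - l*(1 : Matrix (Fin n) (Fin n) ℝ) i j - m*A i j)^2 :=
    Finset.sum_nonneg fun i _ => Finset.sum_nonneg fun j _ => sq_nonneg _
  have hexp : ∑ i, ∑ j, (M i j - l*(1 : Matrix (Fin n) (Fin n) ℝ) i j - m*A i j)^2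
      = (∑ i, ∑ j, M i j ^ 2)
        + l^2*(∑ i, ∑ j, ((1 : Matrix (Fin n) (Fin n) ℝ) i j)^2)
        + 2*l*m*(∑ i, ∑ j, (1 : Matrix (Fin n) (Fin n) ℝ) i j * A i j)
        + m^2*(∑ i, ∑ j, A i j ^ 2)
        - 2*l*(∑ i, ∑ j, (1 : Matrix (Fin n) (Fin n) ℝ) i j * M i j)
        - 2*m*(∑ i, ∑ j, A i j * M i j) := by
    simp_rw [Finset.mul_sum, ← Finset.sum_add_distrib, ← Finset.sum_sub_distrib]
    refine Finset.sum_congr rfl fun i _ => Finset.sum_congr rfl fun j _ => ?_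
    ring
  rw [hexp, sum_one_mul, sum_one_mul, sum_one_sq] at h0
  linarith

/-- Cordes' basic matrix inequality. -/
theorem stmt_0 (n : ℕ) (hn : 2 ≤ n) (δ : ℝ) (hδ0 : 0 < δ) (hδ1 : δ < 1) :
    ∃ c C : ℝ, 0 < c ∧ 0 < C ∧
      ∀ A M : Matrix (Fin n) (Fin n) ℝ, A.IsSymm → A ≠ 0 →
        ((n : ℝ) - 1 + δ) * (∑ i, ∑ j, A i j ^ 2) ≤ (Matrix.trace A) ^ 2 →
        M.IsSymm →
        c * (∑ i, ∑ j, M i j ^ 2) ≤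
          (∑ i, ∑ j, M i j ^ 2) - (Matrix.trace M) ^ 2
            + (C / (∑ i, ∑ j, A i j ^ 2)) * (∑ i, ∑ j, A i j * M i j) ^ 2 := by
  have hN : (2:ℝ) ≤ (n:ℝ) := by exact_mod_cast hn
  have hN0 : (0:ℝ) < (n:ℝ) := by linarith
  refine ⟨δ/2, 2*(n:ℝ)/δ, by positivity, by positivity, ?_⟩
  intro A M _ hA0 hcordes _
  set N : ℝ := (n:ℝ) with hNdef
  set a : ℝ := ∑ i, ∑ j, A i j ^ 2 with hadef
  set s : ℝ := ∑ i, ∑ j, M i j ^ 2 with hsdef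
  set t : ℝ := Matrix.trace M with htdef
  set τ : ℝ := Matrix.trace A with hτdef
  set p : ℝ := ∑ i, ∑ j, A i j * M i j with hpdef
  -- positivity of a
  have ha : 0 < a := by
    rcases lt_or_eq_of_le (Finset.sum_nonneg fun i _ =>
      Finset.sum_nonneg fun j _ => sq_nonneg (A i j) : 0 ≤ a) with h | h
    · exact h
    · exfalso
      apply hA0
      ext i j
      have hinner : ∀ i ∈ Finset.univ, (0:ℝ) ≤ ∑ j, A i j ^ 2 :=
        fun i _ => Finset.sum_nonneg fun j _ => sq_nonneg _
      have h1 : ∑ j, A i j ^ 2 = 0 :=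
        (Finset.sum_eq_zero_iff_of_nonneg hinner).mp h.symm i (Finset.mem_univ i)
      have h2 : A i j ^ 2 = 0 :=
        (Finset.sum_eq_zero_iff_of_nonneg fun j _ => sq_nonneg (A i j)).mp h1 j
          (Finset.mem_univ j)
      simpa using pow_eq_zero_iff (n := 2) (by norm_num) |>.mp h2
  have hs : 0 ≤ s :=
    Finset.sum_nonneg fun i _ => Finset.sum_nonneg fun j _ => sq_nonneg _
  -- the family of inequalities
  have fam : ∀ l m : ℝ, 0 ≤ s + l^2*N + 2*l*m*τ + m^2*a - 2*l*t - 2*m*p :=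
    fun l m => sum_expand A M l m
  -- Cauchy-Schwarz: τ^2 ≤ N*a
  have hcs : τ^2 ≤ N*a := by
    have famA : 0 ≤ a + (τ/N)^2*N + 2*(τ/N)*0*τ + 0^2*a - 2*(τ/N)*τ - 2*0*a := by
      have h := sum_expand A A (τ/N) 0
      have e : ∑ i, ∑ j, A i j * A i j = a := by
        rw [hadef]; exact Finset.sum_congr rfl fun i _ =>
          Finset.sum_congr rfl fun j _ => by rw [sq]
      rw [e] at h
      convert h using 2
    have e2 : a + (τ/N)^2*N + 2*(τ/N)*0*τ + 0^2*a - 2*(τ/N)*τ - 2*0*a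
        = a - τ^2/N := by field_simp; ring
    rw [e2] at famA
    have : τ^2/N ≤ a := by linarith
    calc τ^2 = (τ^2/N)*N := by field_simp
      _ ≤ a*N := mul_le_mul_of_nonneg_right this hN0.le
      _ = N*a := by ring
  -- Gram inequality
  have hG : a*t^2 - 2*τ*t*p + N*p^2 ≤ (N*a - τ^2)*s :=
    G_from_fam N a s τ t p hN0 hs hcs fam
  -- main scalar inequality
  have main := cordes_scalar N δ a s τ t p hN hδ0 hδ1 ha hs hcordes hcs hG
  refine le_of_mul_le_mul_right ?_ ha
  have e : (s - t^2 + (2*N/δ/a)*p^2)*a = a*s - a*t^2 + (2*N/δ)*p^2 := by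
    field_simp
  calc δ/2*s*a = δ/2*a*s := by ring
    _ ≤ a*s - a*t^2 + (2*N/δ)*p^2 := main
    _ = (s - t^2 + (2*N/δ/a)*p^2)*a := e.symm
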